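/- If in addition f is strictly decreasing on [0, ∞), then for every x > 0 one has α(x) := 4 (∫₀ˣ f(t) dt)(∫ₓ^∞ t f(t) dt) − x/2 + 2x (∫₀ˣ f(t) dt)² > 0. -/

import Mathlib

open MeasureTheory

/-- If `f` is nonnegative, strictly decreasing on `[0, ∞)`, with `∫₀^∞ f = 1/2`
and finite first moment, then for every `x > 0`,
`α(x) = 4 (∫₀ˣ f)(∫ₓ^∞ t f(t) dt) − x/2 + 2x (∫₀ˣ f)² > 0`. -/
theorem alpha_pos_of_strictAnti
    (f : ℝ → ℝ) (hf_nonneg : ∀ t, 0 ≤ t → 0 ≤ f t)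
    (hf_mono : ∀ x y : ℝ, 0 ≤ x → x ≤ y → f y ≤ f x)
    (hf_anti : ∀ x y : ℝ, 0 ≤ x → x < y → f y < f x)
    (hf_int : IntegrableOn f (Set.Ioi 0))
    (hf_total : (∫ t in Set.Ioi (0:ℝ), f t) = 1 / 2)
    (hf_mom : IntegrableOn (fun t => t * f t) (Set.Ioi 0)) :
    ∀ x : ℝ, 0 < x →
      0 < 4 * (∫ t in (0:ℝ)..x, f t) * (∫ t in Set.Ioi x, t * f t)
            - x / 2 + 2 * x * (∫ t in (0:ℝ)..x, f t) ^ 2 := by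
  intro x hx
  -- `f` is strictly positive on `[0, ∞)`
  have hfpos : ∀ t : ℝ, 0 ≤ t → 0 < f t := fun t ht =>
    lt_of_le_of_lt (hf_nonneg (t + 1) (by linarith)) (hf_anti t (t + 1) ht (lt_add_one t))
  set c := f x with hc
  have hcpos : 0 < c := hfpos x hx.le
  -- integrability facts
  have hf_int_x : IntegrableOn f (Set.Ioi x) :=
    hf_int.mono_set (Set.Ioi_subset_Ioi hx.le)
  have hmom_x : IntegrableOn (fun t => t * f t) (Set.Ioi x) :=
    hf_mom.mono_set (Set.Ioi_subset_Ioi hx.le)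
  have hsub_x : IntegrableOn (fun t => (t - x) * f t) (Set.Ioi x) := by
    have h0 : IntegrableOn (fun t => t * f t - x * f t) (Set.Ioi x) :=
      hmom_x.sub (hf_int_x.const_mul x)
    refine h0.congr_fun (fun t _ => by ring) measurableSet_Ioi
  set G := ∫ t in Set.Ioi x, f t with hG
  set F := ∫ t in (0:ℝ)..x, f t with hF
  set T := ∫ t in Set.Ioi x, t * f t with hT
  set R := ∫ t in Set.Ioi x, (t - x) * f t with hR
  -- T = x*G + R
  have hTeq : T = x * G + R := by
    have h1 : (∫ t in Set.Ioi x, (t - x) * f t) =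
        (∫ t in Set.Ioi x, t * f t) - ∫ t in Set.Ioi x, x * f t := by
      rw [← integral_sub hmom_x (hf_int_x.const_mul x)]
      refine setIntegral_congr_fun measurableSet_Ioi ?_
      intro t _; ring
    have h2 : (∫ t in Set.Ioi x, x * f t) = x * G := integral_const_mul x f
    rw [hR, h1, h2]; ring
  -- F + G = 1/2
  have hFIoc : F = ∫ t in Set.Ioc 0 x, f t := intervalIntegral.integral_of_le hx.le
  have hFG : F + G = 1 / 2 := by
    rw [hFIoc, hG, ← hf_total, ← setIntegral_union (Set.Ioc_disjoint_Ioi le_rfl)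
      measurableSet_Ioi (hf_int.mono_set Set.Ioc_subset_Ioi_self) hf_int_x,
      Set.Ioc_union_Ioi_eq_Ioi hx.le]
  -- constant lower bound helper
  have hconst : ∀ a b : ℝ, 0 ≤ a → a ≤ b → ∀ m : ℝ, (∀ t ∈ Set.Ioc a b, m ≤ f t) →
      m * (b - a) ≤ ∫ t in Set.Ioc a b, f t := by
    intro a b ha hab m hm
    have hint : IntegrableOn f (Set.Ioc a b) := by
      rcases eq_or_lt_of_le ha with h | h
      · exact hf_int.mono_set (by rw [← h]; exact Set.Ioc_subset_Ioi_self)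
      · exact hf_int.mono_set (Set.Ioc_subset_Ioi_self.trans (Set.Ioi_subset_Ioi h.le))
    have := setIntegral_ge_of_const_le_real (μ := volume) measurableSet_Ioc
      (by simp) hm hint
    rwa [Real.volume_real_Ioc_of_le hab] at this
  -- F > x * c
  have hFgt : x * c < F := by
    have hsplit : F = (∫ t in Set.Ioc 0 (x/2), f t) + ∫ t in Set.Ioc (x/2) x, f t := by
      rw [hFIoc, ← setIntegral_union (Set.Ioc_disjoint_Ioc_of_le le_rfl) measurableSet_Ioc
        (hf_int.mono_set Set.Ioc_subset_Ioi_self)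
        (hf_int.mono_set (Set.Ioc_subset_Ioi_self.trans (Set.Ioi_subset_Ioi (by linarith)))),
        Set.Ioc_union_Ioc_eq_Ioc (by linarith) (by linarith)]
    have h1 : f (x/2) * (x/2 - 0) ≤ ∫ t in Set.Ioc 0 (x/2), f t := by
      refine hconst 0 (x/2) le_rfl (by linarith) _ ?_
      intro t ht
      exact hf_mono t (x/2) ht.1.le ht.2
    have h2 : c * (x - x/2) ≤ ∫ t in Set.Ioc (x/2) x, f t := by
      refine hconst (x/2) x (by linarith) (by linarith) _ ?_
      intro t ht
      exact hf_mono t x (by linarith [ht.1]) ht.2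
    have h3 : c < f (x/2) := hf_anti (x/2) x (by linarith) (by linarith)
    nlinarith
  -- G > 0
  have hGpos : 0 < G := by
    have h1 : f (x+1) * (x + 1 - x) ≤ ∫ t in Set.Ioc x (x+1), f t := by
      refine hconst x (x+1) hx.le (by linarith) _ ?_
      intro t ht
      exact hf_mono t (x+1) (by linarith [ht.1]) ht.2
    have h2 : (∫ t in Set.Ioc x (x+1), f t) ≤ G := by
      rw [hG]
      refine setIntegral_mono_set hf_int_x ?_
        (HasSubset.Subset.eventuallyLE Set.Ioc_subset_Ioi_self)
      filter_upwards [ae_restrict_mem measurableSet_Ioi] with t ht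
      exact hf_nonneg t (by linarith [Set.mem_Ioi.mp ht])
    have := hfpos (x+1) (by linarith)
    nlinarith
  -- key bound: R ≥ a * G / 2 where a = G / c
  set a := G / c with ha
  have hapos : 0 < a := div_pos hGpos hcpos
  have hac : c * a = G := by rw [ha]; exact mul_div_cancel₀ G hcpos.ne'
  have hfle : ∀ t : ℝ, x ≤ t → f t ≤ c := fun t ht => hf_mono x t hx.le ht
  -- split R at x + a
  have hsubIoc : IntegrableOn (fun t => (t - x) * f t) (Set.Ioc x (x+a)) :=
    hsub_x.mono_set Set.Ioc_subset_Ioi_self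
  have hsubIoi : IntegrableOn (fun t => (t - x) * f t) (Set.Ioi (x+a)) :=
    hsub_x.mono_set (Set.Ioi_subset_Ioi (by linarith))
  have hfIoc : IntegrableOn f (Set.Ioc x (x+a)) := hf_int_x.mono_set Set.Ioc_subset_Ioi_self
  have hfIoi : IntegrableOn f (Set.Ioi (x+a)) := hf_int_x.mono_set (Set.Ioi_subset_Ioi (by linarith))
  have hRsplit : R = (∫ t in Set.Ioc x (x+a), (t - x) * f t)
      + ∫ t in Set.Ioi (x+a), (t - x) * f t := by
    rw [hR, ← setIntegral_union (Set.Ioc_disjoint_Ioi le_rfl) measurableSet_Ioi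
      hsubIoc hsubIoi, Set.Ioc_union_Ioi_eq_Ioi (by linarith)]
  have hGsplit : G = (∫ t in Set.Ioc x (x+a), f t) + ∫ t in Set.Ioi (x+a), f t := by
    rw [hG, ← setIntegral_union (Set.Ioc_disjoint_Ioi le_rfl) measurableSet_Ioi
      hfIoc hfIoi, Set.Ioc_union_Ioi_eq_Ioi (by linarith)]
  -- bound on Ioi (x+a)
  have hbound2 : a * (∫ t in Set.Ioi (x+a), f t) ≤ ∫ t in Set.Ioi (x+a), (t - x) * f t := by
    rw [← integral_const_mul]
    refine setIntegral_mono_on (hfIoi.const_mul a) hsubIoi measurableSet_Ioi ?_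
    intro t ht
    have ht' : x + a < t := Set.mem_Ioi.mp ht
    have hfnn : 0 ≤ f t := hf_nonneg t (by linarith)
    nlinarith
  -- bound on Ioc x (x+a)
  have hbound1 : a * (∫ t in Set.Ioc x (x+a), f t) - c * a^2 / 2
      ≤ ∫ t in Set.Ioc x (x+a), (t - x) * f t := by
    have hptwise : ∀ t ∈ Set.Ioc x (x+a), a * f t + (t - x - a) * c ≤ (t - x) * f t := by
      intro t ht
      have h1 : x < t := ht.1
      have h2 : t ≤ x + a := ht.2
      have h3 : f t ≤ c := hfle t h1.le
      nlinarith
    have hcont : IntegrableOn (fun t : ℝ => (t - x - a) * c) (Set.Ioc x (x+a)) :=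
      (((continuous_id.sub continuous_const).sub continuous_const).mul
        continuous_const).integrableOn_Ioc
    have hint1 : IntegrableOn (fun t => a * f t + (t - x - a) * c) (Set.Ioc x (x+a)) :=
      (hfIoc.const_mul a).add hcont
    have hmono := setIntegral_mono_on hint1 hsubIoc measurableSet_Ioc hptwise
    have heval : (∫ t in Set.Ioc x (x+a), (a * f t + (t - x - a) * c))
        = a * (∫ t in Set.Ioc x (x+a), f t) - c * a^2 / 2 := by
      rw [integral_add (hfIoc.const_mul a)]
      · rw [integral_const_mul]
        have : (∫ t in Set.Ioc x (x+a), (t - x - a) * c)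
            = (∫ t in x..(x+a), (t - x - a) * c) := by
          rw [intervalIntegral.integral_of_le (by linarith)]
        rw [this]
        have : (∫ t in x..(x+a), (t - x - a) * c)
            = (∫ t in x..(x+a), (t - x - a)) * c := by
          rw [intervalIntegral.integral_mul_const]
        rw [this]
        have hid : (∫ t in x..(x+a), (t - x - a)) = - a^2 / 2 := by
          have h' : (∫ t in x..(x+a), (t - x - a)) = ∫ t in x..(x+a), (t - (x + a)) := by
            simp only [sub_sub]
          rw [h', intervalIntegral.integral_comp_sub_right (fun t => t) (x+a),
            integral_id]
          ring
        rw [hid]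
        ring
      · exact hcont
    linarith [hmono, heval.ge, heval.le]
  have hRge : a * G / 2 ≤ R := by
    have h1 : a * G - c * a^2 / 2 ≤ R := by
      rw [hRsplit, hGsplit]; linarith [hbound1, hbound2]
    have h3 : c * a^2 / 2 = a * G / 2 := by rw [← hac]; ring
    linarith
  -- conclude
  have hFpos : 0 < F := lt_trans (mul_pos hx hcpos) hFgt
  have haG : 0 < a * G := mul_pos hapos hGpos
  have hRpos : 0 < R := lt_of_lt_of_le (div_pos haG two_pos) hRge
  have hkey : x * G^2 < 2 * F * R := by
    calc x * G^2 = (x * c) * (a * G) := by rw [← hac]; ring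
    _ < F * (a * G) := mul_lt_mul_of_pos_right hFgt haG
    _ = (2 * F) * (a * G / 2) := by ring
    _ ≤ (2 * F) * R := mul_le_mul_of_nonneg_left hRge (by linarith)
    _ = 2 * F * R := by ring
  rw [hTeq]
  have h2 : 2 * x * (F + G)^2 = x / 2 := by rw [hFG]; ring
  have h3 : 4 * F * (x * G + R) - x / 2 + 2 * x * F^2
      = 2 * (2 * F * R - x * G^2) + (2 * x * (F + G)^2 - x / 2) := by ring
  rw [h3, h2]
  linarith [hkey]
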